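/- Chromatic symmetric functions (graded by ascents) satisfy the modular law: for every modular triple (h_-, h, h_+) of Hessenberg functions on [n], (1+q)·csf_h(z;q) = csf_{h_+}(z;q) + q·csf_{h_-}(z;q), where csf_h(z;q) = Σ_{κ ∈ PC(G_h)} z_κ q^{asc(κ)} is the sum over proper colorings κ of G_h. -/

import Mathlib

/-- `h` is a Hessenberg function on `[n] = {1, …, n}` (1-based). -/
def IsHessenberg (n : ℕ) (h : ℕ → ℕ) : Prop :=
  (∀ j, 1 ≤ j → j ≤ n → j ≤ h j ∧ h j ≤ n) ∧
  (∀ j k, 1 ≤ j → j ≤ k → k ≤ n → h j ≤ h k)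

/-- `(hm, h, hp)` is a modular triple of type (C). -/
def TypeC (n : ℕ) (hm h hp : ℕ → ℕ) : Prop :=
  ∃ d₀ d, 1 ≤ d₀ ∧ d₀ < d ∧ d < n ∧ h d = h (d + 1) ∧
    (∀ j, 1 ≤ j → j ≤ n → (h j = d ↔ j = d₀)) ∧
    (∀ j, hm j = if j = d₀ then d - 1 else h j) ∧
    (∀ j, hp j = if j = d₀ then d + 1 else h j)

/-- `(hm, h, hp)` is a modular triple of type (R). -/
def TypeR (n : ℕ) (hm h hp : ℕ → ℕ) : Prop :=
  ∃ d', 1 ≤ d' ∧ d' < n ∧ h d' + 1 = h (d' + 1) ∧ h (d' + 1) ≠ d' + 1 ∧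
    (∀ j, 1 ≤ j → j ≤ n → h j ≠ d') ∧
    (∀ j, hm j = if j = d' + 1 then h d' else h j) ∧
    (∀ j, hp j = if j = d' then h d' + 1 else h j)

/-- `(hm, h, hp)` is a modular triple of Hessenberg functions on `[n]`. -/
def IsModularTriple (n : ℕ) (hm h hp : ℕ → ℕ) : Prop :=
  IsHessenberg n h ∧ (TypeC n hm h hp ∨ TypeR n hm h hp)

/-- The graded chromatic symmetric function
`csf_h(z; q) = Σ_{κ ∈ PC(G_h)} z_κ q^{asc(κ)}`, summed over proper colorings,
restricted to `N` variables (colorings `κ : [n] → [N]`); vertex `v : Fin n`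
represents `v + 1 ∈ [n]`. -/
def csf (n N : ℕ) (h : ℕ → ℕ) {R : Type*} [CommRing R] (q : R) (z : Fin N → R) : R :=
  ∑ κ ∈ Finset.univ.filter (fun κ : Fin n → Fin N =>
      ∀ p : Fin n × Fin n, (p.2 : ℕ) < (p.1 : ℕ) → (p.1 : ℕ) + 1 ≤ h ((p.2 : ℕ) + 1) →
        κ p.2 ≠ κ p.1),
    (∏ i : Fin n, z (κ i)) *
      q ^ ((Finset.univ.filter (fun p : Fin n × Fin n =>
        (p.2 : ℕ) < (p.1 : ℕ) ∧ (p.1 : ℕ) + 1 ≤ h ((p.2 : ℕ) + 1) ∧ κ p.2 < κ p.1)).card)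


open Finset

section Helpers

variable {R : Type*} [CommRing R]

lemma ind_and (P Q : Prop) [Decidable P] [Decidable Q] [Decidable (P ∧ Q)] :
    (if P ∧ Q then (1 : R) else 0) = (if P then 1 else 0) * (if Q then 1 else 0) := by
  split_ifs <;> simp_all

lemma ind_not (P : Prop) [Decidable P] [Decidable ¬P] :
    (if ¬ P then (1 : R) else 0) = if P then 0 else 1 := by
  split_ifs <;> simp_all

lemma card_filter_insert {α : Type*} [DecidableEq α] (E : Finset α) (e : α) (he : e ∉ E)
    (p : α → Prop) [DecidablePred p] :
    ((insert e E).filter p).card = (if p e then 1 else 0) + (E.filter p).card := by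
  rw [filter_insert]
  split_ifs
  · rw [card_insert_of_notMem fun hmem => he (mem_filter.mp hmem).1]; omega
  · simp

def Fcsf (n N : ℕ) (q : R) (z : Fin N → R) (E : Finset (Fin n × Fin n)) : R :=
  ∑ κ : Fin n → Fin N, (∏ i, z (κ i)) *
    (if ∀ p ∈ E, κ p.2 ≠ κ p.1 then 1 else 0) *
    q ^ (E.filter fun p => κ p.2 < κ p.1).card

lemma csf_eq_Fcsf (n N : ℕ) (h : ℕ → ℕ) (q : R) (z : Fin N → R) :
    csf n N h q z = Fcsf n N q z (Finset.univ.filter fun p : Fin n × Fin n =>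
      (p.2 : ℕ) < (p.1 : ℕ) ∧ (p.1 : ℕ) + 1 ≤ h ((p.2 : ℕ) + 1)) := by
  classical
  unfold csf Fcsf
  rw [Finset.sum_filter]
  refine Finset.sum_congr rfl fun κ _ => ?_
  have h1 : (∀ p : Fin n × Fin n, (p.2 : ℕ) < (p.1 : ℕ) → (p.1 : ℕ) + 1 ≤ h ((p.2 : ℕ) + 1) →
      κ p.2 ≠ κ p.1) ↔ ∀ p ∈ (Finset.univ.filter fun p : Fin n × Fin n =>
      (p.2 : ℕ) < (p.1 : ℕ) ∧ (p.1 : ℕ) + 1 ≤ h ((p.2 : ℕ) + 1)), κ p.2 ≠ κ p.1 := by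
    simp [and_imp]
  have h2 : (Finset.univ.filter (fun p : Fin n × Fin n =>
        (p.2 : ℕ) < (p.1 : ℕ) ∧ (p.1 : ℕ) + 1 ≤ h ((p.2 : ℕ) + 1) ∧ κ p.2 < κ p.1)).card
      = (((Finset.univ.filter fun p : Fin n × Fin n =>
        (p.2 : ℕ) < (p.1 : ℕ) ∧ (p.1 : ℕ) + 1 ≤ h ((p.2 : ℕ) + 1))).filter
          fun p => κ p.2 < κ p.1).card := by
    rw [Finset.filter_filter]
    congr 1
    apply Finset.filter_congr
    intro p _
    tauto
  rw [h2]
  split_ifs with hA hB hB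
  · ring
  · exact absurd (h1.mp hA) hB
  · exact absurd (h1.mpr hB) hA
  · ring

end Helpers

section Gdefs

variable {R : Type*} [CommRing R] {β : Type*} [DecidableEq β]

def g0 (q : R) (lt : β → β → Prop) [DecidableRel lt] (x y w : β) : R :=
  (if x = y then 0 else 1) * (if y = w then 0 else 1) *
    q ^ ((if lt x y then 1 else 0) + (if lt y w then 1 else 0))

def g1 (q : R) (lt : β → β → Prop) [DecidableRel lt] (x y w : β) : R :=
  (if x = y then 0 else 1) * (if y = w then 0 else 1) * (if x = w then 0 else 1) *
    q ^ ((if lt x y then 1 else 0) + (if lt y w then 1 else 0) + (if lt x w then 1 else 0))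

def g2 (q : R) (lt : β → β → Prop) [DecidableRel lt] (x y : β) : R :=
  (if x = y then 0 else 1) * q ^ (if lt x y then (1 : ℕ) else 0)

def gD (q : R) (lt : β → β → Prop) [DecidableRel lt] (x y w : β) : R :=
  (1 + q) * g0 q lt x y w - g1 q lt x y w - q * g2 q lt x y

lemma gD_diag (q : R) (lt : β → β → Prop) [DecidableRel lt] (x w : β) :
    gD q lt x x w = 0 := by
  simp [gD, g0, g1, g2]

lemma gD_add_swap (q : R) (lt : β → β → Prop) [DecidableRel lt]
    (hasym : ∀ x y, lt x y → ¬ lt y x) (hirr : ∀ x, ¬ lt x x)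
    (htrans : ∀ x y w, lt x y → lt y w → lt x w)
    (htri : ∀ x y, lt x y ∨ x = y ∨ lt y x)
    (x y w : β) (hxy : lt x y) :
    gD q lt x y w + gD q lt y x w = 0 := by
  have lt_ne : ∀ {a b : β}, lt a b → a ≠ b := fun {a b} hab he => hirr b (he ▸ hab)
  have nyx : ¬ lt y x := hasym _ _ hxy
  have hxney : x ≠ y := lt_ne hxy
  have hynex : y ≠ x := hxney.symm
  rcases htri x w with h1 | h1 | h1 <;> rcases htri y w with h2 | h2 | h2
  · -- lt x w, lt y w
    simp only [gD, g0, g1, g2, if_pos hxy, if_neg nyx, if_pos h1, if_pos h2,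
      if_neg (lt_ne h1), if_neg (lt_ne h2), if_neg hxney, if_neg hynex]
    ring
  · -- lt x w, y = w
    have e1 : ¬ lt y w := by rw [h2]; exact hirr w
    simp only [gD, g0, g1, g2, if_pos hxy, if_neg nyx, if_pos h1, if_neg e1, if_pos h2,
      if_neg (lt_ne h1), if_neg hxney, if_neg hynex]
    ring
  · -- lt x w, lt w y
    have e1 : ¬ lt y w := hasym _ _ h2
    simp only [gD, g0, g1, g2, if_pos hxy, if_neg nyx, if_pos h1, if_neg e1,
      if_neg (lt_ne h1), if_neg (lt_ne h2).symm, if_neg hxney, if_neg hynex]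
    ring
  · -- x = w, lt y w : contradiction with ¬ lt y x
    rw [← h1] at h2; exact absurd h2 nyx
  · -- x = w, y = w : x = y, contradiction
    exact absurd (h1.trans h2.symm) hxney
  · -- x = w, lt w y
    have e1 : ¬ lt y w := hasym _ _ h2
    have e2 : ¬ lt x w := by rw [h1]; exact hirr w
    simp only [gD, g0, g1, g2, if_pos hxy, if_neg nyx, if_pos h1, if_neg e1, if_neg e2,
      if_neg (lt_ne h2).symm, if_neg hxney, if_neg hynex]
    ring
  · -- lt w x, lt y w : transitivity contradiction
    exact absurd (htrans _ _ _ h2 h1) nyx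
  · -- lt w x, y = w : lt y x contradiction
    rw [← h2] at h1; exact absurd h1 nyx
  · -- lt w x, lt w y
    have e1 : ¬ lt x w := hasym _ _ h1
    have e2 : ¬ lt y w := hasym _ _ h2
    simp only [gD, g0, g1, g2, if_pos hxy, if_neg nyx, if_neg e1, if_neg e2,
      if_neg (lt_ne h1).symm, if_neg (lt_ne h2).symm, if_neg hxney, if_neg hynex]
    ring

end Gdefs

section Abstract
set_option maxHeartbeats 2000000

variable {R : Type*} [CommRing R]

def mbase (n N : ℕ) (q : R) (z : Fin N → R) (core : Finset (Fin n × Fin n))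
    (κ : Fin n → Fin N) : R :=
  (∏ i, z (κ i)) * (if ∀ p ∈ core, κ p.2 ≠ κ p.1 then 1 else 0) *
    q ^ (core.filter fun p => κ p.2 < κ p.1).card

lemma modular_abstract (n N : ℕ) (q : R) (z : Fin N → R)
    (t₁ t₂ s : Fin n) (h12 : t₁ ≠ t₂) (h1s : t₁ ≠ s) (h2s : t₂ ≠ s)
    (core : Finset (Fin n × Fin n)) (e₁ e₂ e₃ : Fin n × Fin n)
    (hc1 : e₁ ∉ core) (hc2 : e₂ ∉ core) (hc3 : e₃ ∉ core)
    (h12' : e₁ ≠ e₂) (h13' : e₁ ≠ e₃) (h23' : e₂ ≠ e₃)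
    (lt : Fin N → Fin N → Prop) [DecidableRel lt]
    (htri : ∀ x y, lt x y ∨ x = y ∨ lt y x)
    (hasym : ∀ x y, lt x y → ¬ lt y x)
    (hirr : ∀ x, ¬ lt x x)
    (htrans : ∀ x y w, lt x y → lt y w → lt x w)
    (hv1 : ∀ κ : Fin n → Fin N, (κ e₁.2 = κ e₁.1) ↔ (κ t₁ = κ t₂))
    (hv2 : ∀ κ : Fin n → Fin N, (κ e₂.2 = κ e₂.1) ↔ (κ t₂ = κ s))
    (hv3 : ∀ κ : Fin n → Fin N, (κ e₃.2 = κ e₃.1) ↔ (κ t₁ = κ s))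
    (hi1 : ∀ κ : Fin n → Fin N, (κ e₁.2 < κ e₁.1) ↔ lt (κ t₁) (κ t₂))
    (hi2 : ∀ κ : Fin n → Fin N, (κ e₂.2 < κ e₂.1) ↔ lt (κ t₂) (κ s))
    (hi3 : ∀ κ : Fin n → Fin N, (κ e₃.2 < κ e₃.1) ↔ lt (κ t₁) (κ s))
    (hswap : ∀ p ∈ core, (Equiv.swap t₁ t₂ p.1, Equiv.swap t₁ t₂ p.2) ∈ core) :
    (1 + q) * Fcsf n N q z (insert e₁ (insert e₂ core)) =
      Fcsf n N q z (insert e₃ (insert e₁ (insert e₂ core))) +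
        q * Fcsf n N q z (insert e₁ core) := by
  classical
  have hφφ : ∀ v, Equiv.swap t₁ t₂ (Equiv.swap t₁ t₂ v) = v :=
    fun v => Equiv.swap_apply_self _ _ _
  have hφs : Equiv.swap t₁ t₂ s = s :=
    Equiv.swap_apply_of_ne_of_ne (Ne.symm h1s) (Ne.symm h2s)
  -- membership facts
  have m1 : e₁ ∉ insert e₂ core := by simp [Finset.mem_insert, hc1, h12']
  have m3 : e₃ ∉ insert e₁ (insert e₂ core) := by
    simp [Finset.mem_insert, hc3, Ne.symm h13', Ne.symm h23']
  -- base invariance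
  have hPiff : ∀ κ : Fin n → Fin N,
      ((∀ p ∈ core, (κ ∘ Equiv.swap t₁ t₂) p.2 ≠ (κ ∘ Equiv.swap t₁ t₂) p.1) ↔
        (∀ p ∈ core, κ p.2 ≠ κ p.1)) := by
    intro κ
    constructor
    · intro H p hp
      have h2 := H _ (hswap p hp)
      simpa [hφφ] using h2
    · intro H p hp
      exact H _ (hswap p hp)
  have hcard : ∀ κ : Fin n → Fin N,
      (core.filter fun p => (κ ∘ Equiv.swap t₁ t₂) p.2 < (κ ∘ Equiv.swap t₁ t₂) p.1).card
        = (core.filter fun p => κ p.2 < κ p.1).card := by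
    intro κ
    apply Finset.card_bij (fun p _ => (Equiv.swap t₁ t₂ p.1, Equiv.swap t₁ t₂ p.2))
    · intro p hp
      rw [Finset.mem_filter] at hp ⊢
      exact ⟨hswap p hp.1, hp.2⟩
    · intro p hp p' hp' hh
      have h1 := congrArg Prod.fst hh
      have h2 := congrArg Prod.snd hh
      simp only at h1 h2
      ext
      · exact (Equiv.swap t₁ t₂).injective h1 ▸ rfl
      · exact (Equiv.swap t₁ t₂).injective h2 ▸ rfl
    · intro p hp
      refine ⟨(Equiv.swap t₁ t₂ p.1, Equiv.swap t₁ t₂ p.2), ?_, ?_⟩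
      · rw [Finset.mem_filter] at hp ⊢
        refine ⟨hswap _ hp.1, ?_⟩
        simpa [hφφ] using hp.2
      · simp [hφφ]
  have hbase : ∀ κ : Fin n → Fin N,
      mbase n N q z core (κ ∘ Equiv.swap t₁ t₂) = mbase n N q z core κ := by
    intro κ
    unfold mbase
    have hz : (∏ i, z ((κ ∘ Equiv.swap t₁ t₂) i)) = ∏ i, z (κ i) :=
      Equiv.prod_comp (Equiv.swap t₁ t₂) fun i => z (κ i)
    rw [hz, hcard κ]
    congr 1
    congr 1
    simp only [hPiff κ]
  -- reindexing
  have reindex : ∀ G : Fin N → Fin N → Fin N → R,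
      (∑ κ : Fin n → Fin N, mbase n N q z core κ * G (κ t₁) (κ t₂) (κ s))
        = ∑ κ : Fin n → Fin N, mbase n N q z core κ * G (κ t₂) (κ t₁) (κ s) := by
    intro G
    let eφ : (Fin n → Fin N) ≃ (Fin n → Fin N) :=
      ⟨fun κ => κ ∘ Equiv.swap t₁ t₂, fun κ => κ ∘ Equiv.swap t₁ t₂,
       fun κ => by funext v; simp [hφφ], fun κ => by funext v; simp [hφφ]⟩
    have := (Equiv.sum_comp eφ
      (fun κ : Fin n → Fin N => mbase n N q z core κ * G (κ t₁) (κ t₂) (κ s))).symm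
    rw [this]
    refine Finset.sum_congr rfl fun κ _ => ?_
    show mbase n N q z core (κ ∘ Equiv.swap t₁ t₂) *
        G ((κ ∘ Equiv.swap t₁ t₂) t₁) ((κ ∘ Equiv.swap t₁ t₂) t₂)
          ((κ ∘ Equiv.swap t₁ t₂) s) = _
    rw [hbase κ]
    simp [Equiv.swap_apply_left, Equiv.swap_apply_right, hφs]
  -- expansions
  have hEh : Fcsf n N q z (insert e₁ (insert e₂ core)) =
      ∑ κ : Fin n → Fin N, mbase n N q z core κ * g0 q lt (κ t₁) (κ t₂) (κ s) := by
    unfold Fcsf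
    refine Finset.sum_congr rfl fun κ _ => ?_
    rw [card_filter_insert _ _ m1, card_filter_insert _ _ hc2]
    simp only [Finset.forall_mem_insert, ne_eq, hv1 κ, hv2 κ, hi1 κ, hi2 κ,
      ind_and, ind_not, mbase, g0]
    split_ifs <;> ring
  have hEp : Fcsf n N q z (insert e₃ (insert e₁ (insert e₂ core))) =
      ∑ κ : Fin n → Fin N, mbase n N q z core κ * g1 q lt (κ t₁) (κ t₂) (κ s) := by
    unfold Fcsf
    refine Finset.sum_congr rfl fun κ _ => ?_
    rw [card_filter_insert _ _ m3, card_filter_insert _ _ m1, card_filter_insert _ _ hc2]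
    simp only [Finset.forall_mem_insert, ne_eq, hv1 κ, hv2 κ, hv3 κ, hi1 κ, hi2 κ, hi3 κ,
      ind_and, ind_not, mbase, g1]
    split_ifs <;> ring
  have hEm : Fcsf n N q z (insert e₁ core) =
      ∑ κ : Fin n → Fin N, mbase n N q z core κ * g2 q lt (κ t₁) (κ t₂) := by
    unfold Fcsf
    refine Finset.sum_congr rfl fun κ _ => ?_
    rw [card_filter_insert _ _ hc1]
    simp only [Finset.forall_mem_insert, ne_eq, hv1 κ, hi1 κ, ind_and, ind_not, mbase, g2]
    split_ifs <;> ring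
  -- main combination
  have main : ∑ κ : Fin n → Fin N, mbase n N q z core κ * gD q lt (κ t₁) (κ t₂) (κ s) = 0 := by
    have hdecomp : ∀ x y w : Fin N, gD q lt x y w =
        (if lt y x then gD q lt x y w else 0) - (if lt x y then gD q lt y x w else 0) := by
      intro x y w
      rcases htri x y with hh | hh | hh
      · rw [if_neg (hasym _ _ hh), if_pos hh]
        have h0 := gD_add_swap q lt hasym hirr htrans htri x y w hh
        linear_combination h0
      · subst hh
        rw [if_neg (hirr x), gD_diag]
        ring
      · rw [if_pos hh, if_neg (hasym _ _ hh)]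
        ring
    calc ∑ κ : Fin n → Fin N, mbase n N q z core κ * gD q lt (κ t₁) (κ t₂) (κ s)
        = ∑ κ : Fin n → Fin N,
            (mbase n N q z core κ * (if lt (κ t₂) (κ t₁) then gD q lt (κ t₁) (κ t₂) (κ s) else 0)
             - mbase n N q z core κ *
                (if lt (κ t₁) (κ t₂) then gD q lt (κ t₂) (κ t₁) (κ s) else 0)) := by
          refine Finset.sum_congr rfl fun κ _ => ?_
          conv_lhs => rw [hdecomp (κ t₁) (κ t₂) (κ s)]
          ring
      _ = (∑ κ : Fin n → Fin N, mbase n N q z core κ *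
              (if lt (κ t₂) (κ t₁) then gD q lt (κ t₁) (κ t₂) (κ s) else 0))
          - ∑ κ : Fin n → Fin N, mbase n N q z core κ *
              (if lt (κ t₁) (κ t₂) then gD q lt (κ t₂) (κ t₁) (κ s) else 0) :=
          Finset.sum_sub_distrib _ _
      _ = 0 := by
          rw [reindex (fun x y w => if lt y x then gD q lt x y w else 0)]
          ring
  rw [hEh, hEp, hEm, Finset.mul_sum, Finset.mul_sum, ← Finset.sum_add_distrib, ← sub_eq_zero,
    ← Finset.sum_sub_distrib]
  rw [← main]
  refine Finset.sum_congr rfl fun κ _ => ?_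
  simp only [gD]
  ring

end Abstract

section TypeRCase

variable {R : Type*} [CommRing R]

set_option maxHeartbeats 1000000 in
lemma typeR_case (n N : ℕ) (h hmf hpf : ℕ → ℕ) (q : R) (z : Fin N → R) (a e : ℕ)
    (han : a + 1 < n) (hen : e + 1 ≤ n) (hae : a + 2 ≤ e)
    (hha : h (a + 1) = e) (hha2 : h (a + 2) = e + 1)
    (hno : ∀ j, 1 ≤ j → j ≤ n → h j ≠ a + 1)
    (hhm : ∀ j, hmf j = if j = a + 2 then h (a + 1) else h j)
    (hhp : ∀ j, hpf j = if j = a + 1 then h (a + 1) + 1 else h j) :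
    (1 + q) * Fcsf n N q z (Finset.univ.filter fun p : Fin n × Fin n =>
        (p.2 : ℕ) < (p.1 : ℕ) ∧ (p.1 : ℕ) + 1 ≤ h ((p.2 : ℕ) + 1)) =
      Fcsf n N q z (Finset.univ.filter fun p : Fin n × Fin n =>
        (p.2 : ℕ) < (p.1 : ℕ) ∧ (p.1 : ℕ) + 1 ≤ hpf ((p.2 : ℕ) + 1)) +
      q * Fcsf n N q z (Finset.univ.filter fun p : Fin n × Fin n =>
        (p.2 : ℕ) < (p.1 : ℕ) ∧ (p.1 : ℕ) + 1 ≤ hmf ((p.2 : ℕ) + 1)) := by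
  classical
  have hn1 : e < n := by omega
  have hn0 : a < n := by omega
  have hha2' : h (a + 1 + 1) = e + 1 := hha2
  set t₁ : Fin n := ⟨a, hn0⟩ with ht₁
  set t₂ : Fin n := ⟨a + 1, han⟩ with ht₂
  set vs : Fin n := ⟨e, hn1⟩ with hvs
  set EH := Finset.univ.filter (fun p : Fin n × Fin n =>
    (p.2 : ℕ) < (p.1 : ℕ) ∧ (p.1 : ℕ) + 1 ≤ h ((p.2 : ℕ) + 1)) with hEHd
  set EP := Finset.univ.filter (fun p : Fin n × Fin n =>
    (p.2 : ℕ) < (p.1 : ℕ) ∧ (p.1 : ℕ) + 1 ≤ hpf ((p.2 : ℕ) + 1)) with hEPd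
  set EM := Finset.univ.filter (fun p : Fin n × Fin n =>
    (p.2 : ℕ) < (p.1 : ℕ) ∧ (p.1 : ℕ) + 1 ≤ hmf ((p.2 : ℕ) + 1)) with hEMd
  have memEH : ∀ (iv jv : ℕ) (h1 : iv < n) (h2 : jv < n),
      ((⟨iv, h1⟩, ⟨jv, h2⟩) : Fin n × Fin n) ∈ EH ↔ (jv < iv ∧ iv + 1 ≤ h (jv + 1)) := by
    intro iv jv h1 h2
    simp [hEHd, Finset.mem_filter]
  have he1 : ((t₂, t₁) : Fin n × Fin n) ∈ EH := by
    rw [ht₁, ht₂, memEH]; exact ⟨by omega, by omega⟩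
  have he2 : ((vs, t₂) : Fin n × Fin n) ∈ EH := by
    rw [ht₂, hvs, memEH]; exact ⟨by omega, by omega⟩
  have he3 : ((vs, t₁) : Fin n × Fin n) ∉ EH := by
    rw [ht₁, hvs, memEH]; omega
  have hne12 : ((t₂, t₁) : Fin n × Fin n) ≠ (vs, t₂) := by
    rw [ht₁, ht₂, hvs]; simp only [ne_eq, Prod.mk.injEq, Fin.mk.injEq, not_and]; omega
  have hne13 : ((t₂, t₁) : Fin n × Fin n) ≠ (vs, t₁) := by
    rw [ht₁, ht₂, hvs]; simp only [ne_eq, Prod.mk.injEq, Fin.mk.injEq, not_and]; omega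
  have hne23 : ((vs, t₂) : Fin n × Fin n) ≠ (vs, t₁) := by
    rw [ht₁, ht₂, hvs]; simp only [ne_eq, Prod.mk.injEq, Fin.mk.injEq, not_and]; omega
  set core := (EH.erase (t₂, t₁)).erase (vs, t₂) with hcored
  have memcore : ∀ (iv jv : ℕ) (h1 : iv < n) (h2 : jv < n),
      ((⟨iv, h1⟩, ⟨jv, h2⟩) : Fin n × Fin n) ∈ core ↔
        (¬(iv = e ∧ jv = a + 1) ∧ ¬(iv = a + 1 ∧ jv = a) ∧ jv < iv ∧ iv + 1 ≤ h (jv + 1)) := by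
    intro iv jv h1 h2
    rw [hcored, Finset.mem_erase, Finset.mem_erase, memEH]
    rw [ht₁, ht₂, hvs]
    simp only [ne_eq, Prod.mk.injEq, Fin.mk.injEq, not_and]
    all_goals tauto
  have hEPins : EP = insert ((vs, t₁) : Fin n × Fin n) EH := by
    rw [hEPd, hEHd, ht₁, hvs]
    ext p
    obtain ⟨⟨iv, hiv⟩, ⟨jv, hjv⟩⟩ := p
    simp only [Finset.mem_insert, Finset.mem_filter, Finset.mem_univ, true_and,
      Prod.mk.injEq, Fin.mk.injEq]
    rw [hhp (jv + 1)]
    by_cases hj : jv + 1 = a + 1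
    · rw [if_pos hj]
      have hj' : jv = a := by omega
      subst hj'
      omega
    · rw [if_neg hj]
      omega
  have hEMers : EM = EH.erase ((vs, t₂) : Fin n × Fin n) := by
    rw [hEMd, hEHd, ht₂, hvs]
    ext p
    obtain ⟨⟨iv, hiv⟩, ⟨jv, hjv⟩⟩ := p
    simp only [Finset.mem_erase, Finset.mem_filter, Finset.mem_univ, true_and, ne_eq,
      Prod.mk.injEq, Fin.mk.injEq]
    rw [hhm (jv + 1)]
    by_cases hj : jv + 1 = a + 2
    · rw [if_pos hj]
      have hj' : jv = a + 1 := by omega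
      subst hj'
      omega
    · rw [if_neg hj]
      omega
  have swap_eval : ∀ (m' : ℕ) (hm' : m' < n), Equiv.swap t₁ t₂ ⟨m', hm'⟩ =
      if m' = a then t₂ else if m' = a + 1 then t₁ else ⟨m', hm'⟩ := by
    intro m' hm'
    by_cases h1 : m' = a
    · rw [if_pos h1, show (⟨m', hm'⟩ : Fin n) = t₁ from by rw [ht₁]; exact Fin.mk_eq_mk.mpr h1]
      exact Equiv.swap_apply_left _ _
    · by_cases h2 : m' = a + 1
      · rw [if_neg h1, if_pos h2,
          show (⟨m', hm'⟩ : Fin n) = t₂ from by rw [ht₂]; exact Fin.mk_eq_mk.mpr h2]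
        exact Equiv.swap_apply_right _ _
      · rw [if_neg h1, if_neg h2]
        exact Equiv.swap_apply_of_ne_of_ne
          (by rw [ht₁]; exact fun hh => h1 (Fin.mk_eq_mk.mp hh))
          (by rw [ht₂]; exact fun hh => h2 (Fin.mk_eq_mk.mp hh))
  have hswapR : ∀ p ∈ core, (Equiv.swap t₁ t₂ p.1, Equiv.swap t₁ t₂ p.2) ∈ core := by
    rintro ⟨⟨iv, hiv⟩, ⟨jv, hjv⟩⟩ hp'
    rw [memcore] at hp'
    obtain ⟨f1, f2, f3, f4⟩ := hp'
    have hnoj : h (jv + 1) ≠ a + 1 := hno (jv + 1) (by omega) (by omega)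
    simp only [swap_eval iv hiv, swap_eval jv hjv]
    by_cases g1 : iv = a
    · rw [if_pos g1, if_neg (by omega : ¬ jv = a), if_neg (by omega : ¬ jv = a + 1), ht₂]
      subst g1
      exact (memcore _ _ _ _).mpr (by omega)
    · by_cases g2 : iv = a + 1
      · rw [if_neg g1, if_pos g2, if_neg (by omega : ¬ jv = a), if_neg (by omega : ¬ jv = a + 1),
          ht₁]
        subst g2
        exact (memcore _ _ _ _).mpr (by omega)
      · by_cases g3 : jv = a
        · rw [if_neg g1, if_neg g2, if_pos g3, ht₂]
          subst g3
          exact (memcore _ _ _ _).mpr (by omega)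
        · by_cases g4 : jv = a + 1
          · rw [if_neg g1, if_neg g2, if_neg g3, if_pos g4, ht₁]
            subst g4
            exact (memcore _ _ _ _).mpr (by omega)
          · rw [if_neg g1, if_neg g2, if_neg g3, if_neg g4]
            exact (memcore _ _ _ _).mpr (by omega)
  have hEHins : EH = insert ((t₂, t₁) : Fin n × Fin n) (insert ((vs, t₂) : Fin n × Fin n) core) := by
    rw [hcored, Finset.insert_erase (Finset.mem_erase.mpr ⟨Ne.symm hne12, he2⟩),
      Finset.insert_erase he1]
  have hEMcore : EH.erase ((vs, t₂) : Fin n × Fin n) = insert ((t₂, t₁) : Fin n × Fin n) core := by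
    ext p
    rw [hcored]
    simp only [Finset.mem_insert, Finset.mem_erase, ne_eq]
    constructor
    · rintro ⟨hne2, hmem⟩
      rcases eq_or_ne p (t₂, t₁) with rfl | hne1
      · exact Or.inl rfl
      · exact Or.inr ⟨hne2, hne1, hmem⟩
    · rintro (rfl | ⟨hne2, hne1, hmem⟩)
      · exact ⟨hne12, he1⟩
      · exact ⟨hne2, hmem⟩
  rw [hEPins, hEMers, hEMcore, hEHins]
  have h12 : t₁ ≠ t₂ := by rw [ht₁, ht₂]; exact fun hh => by have := Fin.mk_eq_mk.mp hh; omega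
  have h1s : t₁ ≠ vs := by rw [ht₁, hvs]; exact fun hh => by have := Fin.mk_eq_mk.mp hh; omega
  have h2s : t₂ ≠ vs := by rw [ht₂, hvs]; exact fun hh => by have := Fin.mk_eq_mk.mp hh; omega
  have hc1 : ((t₂, t₁) : Fin n × Fin n) ∉ core := by
    rw [hcored]
    exact fun hm => (Finset.mem_erase.mp (Finset.mem_of_mem_erase hm)).1 rfl
  have hc2 : ((vs, t₂) : Fin n × Fin n) ∉ core := by
    rw [hcored]
    exact fun hm => (Finset.mem_erase.mp hm).1 rfl
  have hc3 : ((vs, t₁) : Fin n × Fin n) ∉ core := by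
    rw [hcored]
    exact fun hm => he3 (Finset.mem_of_mem_erase (Finset.mem_of_mem_erase hm))
  exact modular_abstract n N q z t₁ t₂ vs h12 h1s h2s core (t₂, t₁) (vs, t₂) (vs, t₁)
    hc1 hc2 hc3 hne12 hne13 hne23 (· < ·)
    (fun x y => lt_trichotomy x y)
    (fun x y hxy => lt_asymm hxy)
    (fun x => lt_irrefl x)
    (fun x y w h1 h2 => lt_trans h1 h2)
    (fun κ => Iff.rfl) (fun κ => Iff.rfl) (fun κ => Iff.rfl)
    (fun κ => Iff.rfl) (fun κ => Iff.rfl) (fun κ => Iff.rfl)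
    hswapR

end TypeRCase

section TypeCCase

variable {R : Type*} [CommRing R]

set_option maxHeartbeats 1000000 in
lemma typeC_case (n N : ℕ) (h hmf hpf : ℕ → ℕ) (q : R) (z : Fin N → R) (g m : ℕ)
    (hgm : g < m) (hmn : m + 1 < n)
    (hvg : h (g + 1) = m + 1)
    (hm1 : m + 2 ≤ h (m + 1)) (heq : h (m + 1) = h (m + 2))
    (hnod : ∀ j, 1 ≤ j → j ≤ n → h j = m + 1 → j = g + 1)
    (hhm : ∀ j, hmf j = if j = g + 1 then m else h j)
    (hhp : ∀ j, hpf j = if j = g + 1 then m + 2 else h j) :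
    (1 + q) * Fcsf n N q z (Finset.univ.filter fun p : Fin n × Fin n =>
        (p.2 : ℕ) < (p.1 : ℕ) ∧ (p.1 : ℕ) + 1 ≤ h ((p.2 : ℕ) + 1)) =
      Fcsf n N q z (Finset.univ.filter fun p : Fin n × Fin n =>
        (p.2 : ℕ) < (p.1 : ℕ) ∧ (p.1 : ℕ) + 1 ≤ hpf ((p.2 : ℕ) + 1)) +
      q * Fcsf n N q z (Finset.univ.filter fun p : Fin n × Fin n =>
        (p.2 : ℕ) < (p.1 : ℕ) ∧ (p.1 : ℕ) + 1 ≤ hmf ((p.2 : ℕ) + 1)) := by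
  classical
  have hn1 : m < n := by omega
  have hn0 : g < n := by omega
  have heq' : h (m + 1 + 1) = h (m + 1) := by
    rw [show m + 1 + 1 = m + 2 from rfl, heq]
  set t₁ : Fin n := ⟨m + 1, hmn⟩ with ht₁
  set t₂ : Fin n := ⟨m, hn1⟩ with ht₂
  set vs : Fin n := ⟨g, hn0⟩ with hvs
  set EH := Finset.univ.filter (fun p : Fin n × Fin n =>
    (p.2 : ℕ) < (p.1 : ℕ) ∧ (p.1 : ℕ) + 1 ≤ h ((p.2 : ℕ) + 1)) with hEHd
  set EP := Finset.univ.filter (fun p : Fin n × Fin n =>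
    (p.2 : ℕ) < (p.1 : ℕ) ∧ (p.1 : ℕ) + 1 ≤ hpf ((p.2 : ℕ) + 1)) with hEPd
  set EM := Finset.univ.filter (fun p : Fin n × Fin n =>
    (p.2 : ℕ) < (p.1 : ℕ) ∧ (p.1 : ℕ) + 1 ≤ hmf ((p.2 : ℕ) + 1)) with hEMd
  have memEH : ∀ (iv jv : ℕ) (h1 : iv < n) (h2 : jv < n),
      ((⟨iv, h1⟩, ⟨jv, h2⟩) : Fin n × Fin n) ∈ EH ↔ (jv < iv ∧ iv + 1 ≤ h (jv + 1)) := by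
    intro iv jv h1 h2
    simp [hEHd, Finset.mem_filter]
  have he1 : ((t₁, t₂) : Fin n × Fin n) ∈ EH := by
    rw [ht₁, ht₂, memEH]; exact ⟨by omega, by omega⟩
  have he2 : ((t₂, vs) : Fin n × Fin n) ∈ EH := by
    rw [ht₂, hvs, memEH]; exact ⟨by omega, by omega⟩
  have he3 : ((t₁, vs) : Fin n × Fin n) ∉ EH := by
    rw [ht₁, hvs, memEH]; omega
  have hne12 : ((t₁, t₂) : Fin n × Fin n) ≠ (t₂, vs) := by
    rw [ht₁, ht₂, hvs]; simp only [ne_eq, Prod.mk.injEq, Fin.mk.injEq, not_and]; omega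
  have hne13 : ((t₁, t₂) : Fin n × Fin n) ≠ (t₁, vs) := by
    rw [ht₁, ht₂, hvs]; simp only [ne_eq, Prod.mk.injEq, Fin.mk.injEq, not_and]; omega
  have hne23 : ((t₂, vs) : Fin n × Fin n) ≠ (t₁, vs) := by
    rw [ht₁, ht₂, hvs]; simp only [ne_eq, Prod.mk.injEq, Fin.mk.injEq, not_and]; omega
  set core := (EH.erase (t₁, t₂)).erase (t₂, vs) with hcored
  have memcore : ∀ (iv jv : ℕ) (h1 : iv < n) (h2 : jv < n),
      ((⟨iv, h1⟩, ⟨jv, h2⟩) : Fin n × Fin n) ∈ core ↔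
        (¬(iv = m ∧ jv = g) ∧ ¬(iv = m + 1 ∧ jv = m) ∧ jv < iv ∧ iv + 1 ≤ h (jv + 1)) := by
    intro iv jv h1 h2
    rw [hcored, Finset.mem_erase, Finset.mem_erase, memEH]
    rw [ht₁, ht₂, hvs]
    simp only [ne_eq, Prod.mk.injEq, Fin.mk.injEq, not_and]
    all_goals tauto
  have hEPins : EP = insert ((t₁, vs) : Fin n × Fin n) EH := by
    rw [hEPd, hEHd, ht₁, hvs]
    ext p
    obtain ⟨⟨iv, hiv⟩, ⟨jv, hjv⟩⟩ := p
    simp only [Finset.mem_insert, Finset.mem_filter, Finset.mem_univ, true_and,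
      Prod.mk.injEq, Fin.mk.injEq]
    rw [hhp (jv + 1)]
    by_cases hj : jv + 1 = g + 1
    · rw [if_pos hj]
      have hj' : jv = g := by omega
      subst hj'
      omega
    · rw [if_neg hj]
      omega
  have hEMers : EM = EH.erase ((t₂, vs) : Fin n × Fin n) := by
    rw [hEMd, hEHd, ht₂, hvs]
    ext p
    obtain ⟨⟨iv, hiv⟩, ⟨jv, hjv⟩⟩ := p
    simp only [Finset.mem_erase, Finset.mem_filter, Finset.mem_univ, true_and, ne_eq,
      Prod.mk.injEq, Fin.mk.injEq]
    rw [hhm (jv + 1)]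
    by_cases hj : jv + 1 = g + 1
    · rw [if_pos hj]
      have hj' : jv = g := by omega
      subst hj'
      omega
    · rw [if_neg hj]
      omega
  have swap_eval : ∀ (m' : ℕ) (hm' : m' < n), Equiv.swap t₁ t₂ ⟨m', hm'⟩ =
      if m' = m + 1 then t₂ else if m' = m then t₁ else ⟨m', hm'⟩ := by
    intro m' hm'
    by_cases h1 : m' = m + 1
    · rw [if_pos h1, show (⟨m', hm'⟩ : Fin n) = t₁ from by rw [ht₁]; exact Fin.mk_eq_mk.mpr h1]
      exact Equiv.swap_apply_left _ _
    · by_cases h2 : m' = m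
      · rw [if_neg h1, if_pos h2,
          show (⟨m', hm'⟩ : Fin n) = t₂ from by rw [ht₂]; exact Fin.mk_eq_mk.mpr h2]
        exact Equiv.swap_apply_right _ _
      · rw [if_neg h1, if_neg h2]
        exact Equiv.swap_apply_of_ne_of_ne
          (by rw [ht₁]; exact fun hh => h1 (Fin.mk_eq_mk.mp hh))
          (by rw [ht₂]; exact fun hh => h2 (Fin.mk_eq_mk.mp hh))
  have hswapC : ∀ p ∈ core, (Equiv.swap t₁ t₂ p.1, Equiv.swap t₁ t₂ p.2) ∈ core := by
    rintro ⟨⟨iv, hiv⟩, ⟨jv, hjv⟩⟩ hp'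
    rw [memcore] at hp'
    obtain ⟨f1, f2, f3, f4⟩ := hp'
    have hnoj : h (jv + 1) = m + 1 → jv + 1 = g + 1 := hnod (jv + 1) (by omega) (by omega)
    have hgj : jv = g → h (jv + 1) = m + 1 := fun hh => by rw [hh]; exact hvg
    simp only [swap_eval iv hiv, swap_eval jv hjv]
    by_cases g1 : iv = m + 1
    · rw [if_pos g1, if_neg (by omega : ¬ jv = m + 1), if_neg (by omega : ¬ jv = m), ht₂]
      subst g1
      exact (memcore _ _ _ _).mpr (by omega)
    · by_cases g2 : iv = m
      · rw [if_neg g1, if_pos g2, if_neg (by omega : ¬ jv = m + 1), if_neg (by omega : ¬ jv = m),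
          ht₁]
        subst g2
        exact (memcore _ _ _ _).mpr (by omega)
      · by_cases g3 : jv = m + 1
        · rw [if_neg g1, if_neg g2, if_pos g3, ht₂]
          subst g3
          exact (memcore _ _ _ _).mpr (by omega)
        · by_cases g4 : jv = m
          · rw [if_neg g1, if_neg g2, if_neg g3, if_pos g4, ht₁]
            subst g4
            exact (memcore _ _ _ _).mpr (by omega)
          · rw [if_neg g1, if_neg g2, if_neg g3, if_neg g4]
            exact (memcore _ _ _ _).mpr (by omega)
  have hEHins : EH = insert ((t₁, t₂) : Fin n × Fin n) (insert ((t₂, vs) : Fin n × Fin n) core) := by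
    rw [hcored, Finset.insert_erase (Finset.mem_erase.mpr ⟨Ne.symm hne12, he2⟩),
      Finset.insert_erase he1]
  have hEMcore : EH.erase ((t₂, vs) : Fin n × Fin n) = insert ((t₁, t₂) : Fin n × Fin n) core := by
    ext p
    rw [hcored]
    simp only [Finset.mem_insert, Finset.mem_erase, ne_eq]
    constructor
    · rintro ⟨hne2, hmem⟩
      rcases eq_or_ne p (t₁, t₂) with rfl | hne1
      · exact Or.inl rfl
      · exact Or.inr ⟨hne2, hne1, hmem⟩
    · rintro (rfl | ⟨hne2, hne1, hmem⟩)
      · exact ⟨hne12, he1⟩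
      · exact ⟨hne2, hmem⟩
  rw [hEPins, hEMers, hEMcore, hEHins]
  have h12 : t₁ ≠ t₂ := by rw [ht₁, ht₂]; exact fun hh => by have := Fin.mk_eq_mk.mp hh; omega
  have h1s : t₁ ≠ vs := by rw [ht₁, hvs]; exact fun hh => by have := Fin.mk_eq_mk.mp hh; omega
  have h2s : t₂ ≠ vs := by rw [ht₂, hvs]; exact fun hh => by have := Fin.mk_eq_mk.mp hh; omega
  have hc1 : ((t₁, t₂) : Fin n × Fin n) ∉ core := by
    rw [hcored]
    exact fun hmm => (Finset.mem_erase.mp (Finset.mem_of_mem_erase hmm)).1 rfl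
  have hc2 : ((t₂, vs) : Fin n × Fin n) ∉ core := by
    rw [hcored]
    exact fun hmm => (Finset.mem_erase.mp hmm).1 rfl
  have hc3 : ((t₁, vs) : Fin n × Fin n) ∉ core := by
    rw [hcored]
    exact fun hmm => he3 (Finset.mem_of_mem_erase (Finset.mem_of_mem_erase hmm))
  haveI : DecidableRel (fun x y : Fin N => y < x) := fun x y => inferInstanceAs (Decidable (y < x))
  exact modular_abstract n N q z t₁ t₂ vs h12 h1s h2s core (t₁, t₂) (t₂, vs) (t₁, vs)
    hc1 hc2 hc3 hne12 hne13 hne23 (fun x y : Fin N => y < x)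
    (fun x y => by rcases lt_trichotomy x y with hh | hh | hh
                   · exact Or.inr (Or.inr hh)
                   · exact Or.inr (Or.inl hh)
                   · exact Or.inl hh)
    (fun x y hxy => by exact fun hh => lt_asymm hxy hh)
    (fun x => lt_irrefl x)
    (fun x y w h1 h2 => lt_trans h2 h1)
    (fun κ => eq_comm) (fun κ => eq_comm) (fun κ => eq_comm)
    (fun κ => Iff.rfl) (fun κ => Iff.rfl) (fun κ => Iff.rfl)
    hswapC

end TypeCCase

/-- Chromatic symmetric functions satisfy the modular law:
`(1+q)·csf_h = csf_{h₊} + q·csf_{h₋}` for every modular triple. -/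
theorem csf_modular_law {R : Type*} [CommRing R] (n N : ℕ) (hm h hp : ℕ → ℕ)
    (hmt : IsModularTriple n hm h hp) (q : R) (z : Fin N → R) :
    (1 + q) * csf n N h q z = csf n N hp q z + q * csf n N hm q z := by
  classical
  obtain ⟨hH, htype⟩ := hmt
  rw [csf_eq_Fcsf n N h q z, csf_eq_Fcsf n N hp q z, csf_eq_Fcsf n N hm q z]
  rcases htype with hC | hR
  · obtain ⟨d₀, d, hd0, hd0d, hdn, heq, hiff, hhm', hhp'⟩ := hC
    have hval : h d₀ = d := (hiff d₀ hd0 (by omega)).mpr rfl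
    have hhd : d + 1 ≤ h d := by
      have h1 := (hH.1 d (by omega) (by omega)).1
      have h2 : h d ≠ d := fun hh => by
        have := (hiff d (by omega) (by omega)).mp hh
        omega
      omega
    have hg1 : d₀ - 1 + 1 = d₀ := by omega
    have hm1' : d - 1 + 1 = d := by omega
    have hm2' : d - 1 + 2 = d + 1 := by omega
    refine typeC_case n N h hm hp q z (d₀ - 1) (d - 1) (by omega) (by omega) ?_ ?_ ?_ ?_ ?_ ?_
    · rw [hg1]; omega
    · rw [hm1']; omega
    · rw [hm1', hm2']; exact heq
    · intro j hj1 hjn hjv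
      rw [hg1]
      rw [hm1'] at hjv
      exact (hiff j hj1 hjn).mp hjv
    · intro j
      rw [hg1]
      exact hhm' j
    · intro j
      rw [hg1, hm2']
      exact hhp' j
  · obtain ⟨d', hd1, hdn, hsum, hne, hno, hhm', hhp'⟩ := hR
    have hub : h (d' + 1) ≤ n := (hH.1 (d' + 1) (by omega) (by omega)).2
    have hlb : d' + 1 ≤ h (d' + 1) := (hH.1 (d' + 1) (by omega) (by omega)).1
    have ha1 : d' - 1 + 1 = d' := by omega
    have ha2 : d' - 1 + 2 = d' + 1 := by omega
    refine typeR_case n N h hm hp q z (d' - 1) (h d') (by omega) (by omega) (by omega) ?_ ?_ ?_ ?_ ?_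
    · rw [ha1]
    · rw [ha2]; omega
    · intro j hj1 hjn
      rw [ha1]
      exact hno j hj1 hjn
    · intro j
      rw [ha1, ha2]
      exact hhm' j
    · intro j
      rw [ha1]
      exact hhp' j
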